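/- For $|q| < 1$, $|x| < 1$, $|y| < 1$: $\frac{(xy;q)_\infty}{(x;q)_\infty (y;q)_\infty} = \sum_{r,s \geq 0} \frac{q^{rs} x^r y^s}{(q;q)_r (q;q)_s}$. -/

import Mathlib

open Finset Filter Topology

/-- `(q;q)_n = ∏_{i=1}^n (1 - q^i)`. -/
noncomputable def qPochN (q : ℂ) (n : ℕ) : ℂ :=
  ∏ i ∈ Finset.range n, (1 - q ^ (i + 1))

namespace QAux

noncomputable def poch (a q : ℂ) (n : ℕ) : ℂ := ∏ i ∈ Finset.range n, (1 - a * q ^ i)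

lemma weier (s : Finset ℕ) (t : ℕ → ℝ) (h0 : ∀ i, 0 ≤ t i) (h1 : ∀ i, t i ≤ 1) :
    1 - ∑ i ∈ s, t i ≤ ∏ i ∈ s, (1 - t i) := by
  induction s using Finset.cons_induction with
  | empty => simp
  | cons a s ha ih =>
    rw [Finset.prod_cons, Finset.sum_cons]
    have hp0 : (0:ℝ) ≤ ∏ i ∈ s, (1 - t i) :=
      Finset.prod_nonneg fun i _ => by linarith [h1 i]
    have hp1 : ∏ i ∈ s, (1 - t i) ≤ 1 :=
      Finset.prod_le_one (fun i _ => by linarith [h1 i]) (fun i _ => by linarith [h0 i])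
    nlinarith [h0 a, h1 a, ih]

lemma norm_prod_one_add_le (s : Finset ℕ) (f : ℕ → ℂ) :
    ‖∏ i ∈ s, (1 + f i)‖ ≤ Real.exp (∑ i ∈ s, ‖f i‖) := by
  rw [norm_prod, Real.exp_sum]
  exact Finset.prod_le_prod (fun i _ => norm_nonneg _) fun i _ => by
    calc ‖1 + f i‖ ≤ 1 + ‖f i‖ := by
          simpa using norm_add_le (1:ℂ) (f i)
      _ ≤ Real.exp ‖f i‖ := by linarith [Real.add_one_le_exp ‖f i‖]

lemma norm_prod_one_add_sub_one_le (s : Finset ℕ) (f : ℕ → ℂ) :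
    ‖(∏ i ∈ s, (1 + f i)) - 1‖ ≤ Real.exp (∑ i ∈ s, ‖f i‖) - 1 := by
  induction s using Finset.cons_induction with
  | empty => simp
  | cons a s ha ih =>
    rw [Finset.prod_cons, Finset.sum_cons]
    have hb := norm_prod_one_add_le s f
    have key : (1 + f a) * ∏ i ∈ s, (1 + f i) - 1
        = ((∏ i ∈ s, (1 + f i)) - 1) + f a * ∏ i ∈ s, (1 + f i) := by ring
    rw [key]
    have h2 : ‖((∏ i ∈ s, (1 + f i)) - 1) + f a * ∏ i ∈ s, (1 + f i)‖
        ≤ (Real.exp (∑ i ∈ s, ‖f i‖) - 1) + ‖f a‖ * Real.exp (∑ i ∈ s, ‖f i‖) := by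
      refine (norm_add_le _ _).trans (add_le_add ih ?_)
      rw [norm_mul]
      exact mul_le_mul_of_nonneg_left hb (norm_nonneg _)
    refine h2.trans ?_
    rw [Real.exp_add]
    nlinarith [Real.add_one_le_exp ‖f a‖, Real.exp_pos (∑ i ∈ s, ‖f i‖), norm_nonneg (f a)]

lemma multipliable_one_add (f : ℕ → ℂ) (hf : Summable fun i => ‖f i‖) :
    Multipliable (fun i => 1 + f i) := by
  have hcs : CauchySeq (fun s : Finset ℕ => ∏ i ∈ s, (1 + f i)) := by
    rw [Metric.cauchySeq_iff']
    intro ε hε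
    set B := Real.exp (∑' i, ‖f i‖) with hBdef
    have hBpos : 0 < B := Real.exp_pos _
    obtain ⟨d, hdpos, hd⟩ : ∃ d > 0, B * (Real.exp d - 1) < ε := by
      refine ⟨Real.log (1 + ε / (2 * B)), Real.log_pos (by nlinarith [div_pos hε (by positivity : (0:ℝ) < 2*B)]), ?_⟩
      rw [Real.exp_log (by positivity)]
      have : B * (1 + ε / (2 * B) - 1) = ε / 2 := by
        field_simp
        ring
      rw [this]
      linarith
    obtain ⟨N, hN⟩ := summable_iff_vanishing_norm.1 hf d hdpos
    refine ⟨N, fun n hn => ?_⟩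
    have hsub : N ⊆ n := hn
    rw [dist_eq_norm]
    have hsplit : ∏ i ∈ n, (1 + f i) = (∏ i ∈ n \ N, (1 + f i)) * ∏ i ∈ N, (1 + f i) :=
      (Finset.prod_sdiff hsub).symm
    have : ∏ i ∈ n, (1 + f i) - ∏ i ∈ N, (1 + f i)
        = (∏ i ∈ N, (1 + f i)) * ((∏ i ∈ n \ N, (1 + f i)) - 1) := by
      rw [hsplit]; ring
    rw [this, norm_mul]
    have h1 : ‖∏ i ∈ N, (1 + f i)‖ ≤ B := by
      refine (norm_prod_one_add_le N f).trans (Real.exp_le_exp.2 ?_)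
      exact Summable.sum_le_tsum N (fun i _ => norm_nonneg _) hf
    have h2 : ‖(∏ i ∈ n \ N, (1 + f i)) - 1‖ ≤ Real.exp d - 1 := by
      refine (norm_prod_one_add_sub_one_le _ f).trans ?_
      have hds : ‖∑ i ∈ n \ N, ‖f i‖‖ < d := hN _ (Finset.sdiff_disjoint)
      have : ∑ i ∈ n \ N, ‖f i‖ < d := by
        refine lt_of_le_of_lt (le_abs_self _) ?_
        simpa [Real.norm_eq_abs] using hds
      linarith [Real.exp_le_exp.2 this.le]
    calc ‖∏ i ∈ N, (1 + f i)‖ * ‖(∏ i ∈ n \ N, (1 + f i)) - 1‖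
        ≤ B * (Real.exp d - 1) := by
          refine mul_le_mul h1 h2 (norm_nonneg _) hBpos.le
      _ < ε := hd
  obtain ⟨P, hP⟩ := cauchySeq_tendsto_of_complete hcs
  exact ⟨P, hP⟩


variable {q : ℂ}

lemma summable_norm_aq (a : ℂ) (hq : ‖q‖ < 1) : Summable fun i : ℕ => ‖a * q ^ i‖ := by
  simpa [norm_mul, norm_pow] using
    (summable_geometric_of_lt_one (norm_nonneg q) hq).mul_left ‖a‖

lemma multipliable_geo (a : ℂ) (hq : ‖q‖ < 1) :
    Multipliable (fun i : ℕ => 1 - a * q ^ i) := by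
  have := multipliable_one_add (fun i => -(a * q ^ i))
    (by simpa using summable_norm_aq a hq)
  exact this.congr fun i => by ring

lemma multipliable_geo_shift (a : ℂ) (hq : ‖q‖ < 1) (k : ℕ) :
    Multipliable (fun i : ℕ => 1 - a * q ^ (i + k)) :=
  (multipliable_geo (a * q ^ k) hq).congr fun i => by rw [pow_add]; ring

lemma tendsto_partial_prod (a : ℂ) (hq : ‖q‖ < 1) :
    Tendsto (fun N => ∏ i ∈ range N, (1 - a * q ^ i)) atTop
      (𝓝 (∏' i : ℕ, (1 - a * q ^ i))) :=
  (multipliable_geo a hq).hasProd.tendsto_prod_nat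

lemma one_sub_ne_zero_of_norm_lt_one {z : ℂ} (hz : ‖z‖ < 1) : (1 : ℂ) - z ≠ 0 := by
  intro h
  have : z = 1 := by linear_combination -h
  rw [this] at hz; simp at hz

lemma factor_ne_zero {a : ℂ} (ha : ‖a‖ < 1) (hq : ‖q‖ < 1) (i : ℕ) :
    (1 : ℂ) - a * q ^ i ≠ 0 := by
  refine one_sub_ne_zero_of_norm_lt_one ?_
  calc ‖a * q ^ i‖ = ‖a‖ * ‖q‖ ^ i := by rw [norm_mul, norm_pow]
    _ ≤ ‖a‖ * 1 := by
        refine mul_le_mul_of_nonneg_left (pow_le_one₀ (norm_nonneg q) hq.le) (norm_nonneg a)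
    _ < 1 := by simpa using ha

lemma tprod_factorization (a : ℂ) (hq : ‖q‖ < 1) (k : ℕ) :
    (poch a q k) * ∏' i : ℕ, (1 - a * q ^ k * q ^ i) = ∏' i : ℕ, (1 - a * q ^ i) := by
  have hm : Multipliable (fun i : ℕ => 1 - a * q ^ (i + k)) := multipliable_geo_shift a hq k
  have := Multipliable.prod_mul_tprod_nat_mul' (f := fun i : ℕ => 1 - a * q ^ i) (k := k) hm
  rw [← this]
  congr 1
  exact tprod_congr fun i => by show 1 - a * q ^ k * q ^ i = 1 - a * q ^ (i + k); rw [pow_add]; ring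

lemma tail_tprod_sub_one_le (a : ℂ) (hq : ‖q‖ < 1) (k : ℕ) :
    ‖(∏' i : ℕ, (1 - a * q ^ k * q ^ i)) - 1‖
      ≤ Real.exp (∑' i : ℕ, ‖a * q ^ k * q ^ i‖) - 1 := by
  have hm : Multipliable (fun i : ℕ => 1 - a * q ^ k * q ^ i) := multipliable_geo _ hq
  have hten := hm.hasProd.tendsto_prod_nat
  have hnorm : Tendsto (fun N => ‖(∏ i ∈ range N, (1 - a * q ^ k * q ^ i)) - 1‖) atTop
      (𝓝 ‖(∏' i : ℕ, (1 - a * q ^ k * q ^ i)) - 1‖) :=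
    ((hten.sub tendsto_const_nhds).norm)
  refine le_of_tendsto hnorm (Eventually.of_forall fun N => ?_)
  have h1 : ‖(∏ i ∈ range N, (1 - a * q ^ k * q ^ i)) - 1‖
      ≤ Real.exp (∑ i ∈ range N, ‖-(a * q ^ k * q ^ i)‖) - 1 := by
    have := norm_prod_one_add_sub_one_le (range N) (fun i => -(a * q ^ k * q ^ i))
    simpa [sub_eq_add_neg] using this
  refine h1.trans ?_
  have : ∑ i ∈ range N, ‖-(a * q ^ k * q ^ i)‖ ≤ ∑' i : ℕ, ‖a * q ^ k * q ^ i‖ := by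
    simpa using Summable.sum_le_tsum (range N) (fun i _ => norm_nonneg _) (summable_norm_aq (a * q ^ k) hq)
  linarith [Real.exp_le_exp.2 this]

lemma tprod_ne_zero {a : ℂ} (ha : ‖a‖ < 1) (hq : ‖q‖ < 1) :
    (∏' i : ℕ, (1 - a * q ^ i)) ≠ 0 := by
  -- choose k with tail sum < log 2
  have hgeo : Tendsto (fun k : ℕ => ‖a‖ * ‖q‖ ^ k * (1 - ‖q‖)⁻¹) atTop (𝓝 0) := by
    have := (tendsto_pow_atTop_nhds_zero_of_lt_one (norm_nonneg q) hq)
    simpa using ((this.const_mul ‖a‖).mul_const (1 - ‖q‖)⁻¹)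
  have hlog2 : (0:ℝ) < Real.log 2 := Real.log_pos (by norm_num)
  obtain ⟨k, hk⟩ := (hgeo.eventually_lt_const hlog2).exists
  have htail : ∑' i : ℕ, ‖a * q ^ k * q ^ i‖ < Real.log 2 := by
    have hcalc : ∑' i : ℕ, ‖a * q ^ k * q ^ i‖ = ‖a * q ^ k‖ * (1 - ‖q‖)⁻¹ := by
      rw [← tsum_geometric_of_lt_one (norm_nonneg q) hq, ← tsum_mul_left]
      exact tsum_congr fun i => by rw [norm_mul, norm_pow]
    rw [hcalc]
    refine lt_of_le_of_lt ?_ hk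
    have : ‖a * q ^ k‖ ≤ ‖a‖ * ‖q‖ ^ k := by rw [norm_mul, norm_pow]
    have hinv : (0:ℝ) ≤ (1 - ‖q‖)⁻¹ := le_of_lt (inv_pos.2 (by linarith))
    nlinarith
  set T := ∏' i : ℕ, (1 - a * q ^ k * q ^ i) with hT
  have hT1 : ‖T - 1‖ < 1 := by
    refine lt_of_le_of_lt (tail_tprod_sub_one_le a hq k) ?_
    have := Real.exp_lt_exp.2 htail
    rw [Real.exp_log (by norm_num : (0:ℝ) < 2)] at this
    linarith
  have hTne : T ≠ 0 := by
    intro h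
    rw [h] at hT1
    simp at hT1
  have hfin : poch a q k ≠ 0 := by
    refine Finset.prod_ne_zero_iff.2 fun i _ => factor_ne_zero ha hq i
  rw [← tprod_factorization a hq k]
  exact mul_ne_zero hfin hTne


lemma exists_qPochN_lower (hq : ‖q‖ < 1) :
    ∃ δ : ℝ, 0 < δ ∧ ∀ n, δ ≤ ‖qPochN q n‖ := by
  set c := ‖q‖ with hc
  have hc0 : 0 ≤ c := norm_nonneg q
  have hfac0 : ∀ i : ℕ, 0 ≤ 1 - c ^ (i + 1) := fun i => by
    have : c ^ (i+1) ≤ 1 := pow_le_one₀ hc0 hq.le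
    linarith
  have hfacpos : ∀ i : ℕ, 0 < 1 - c ^ (i + 1) := fun i => by
    have : c ^ (i+1) < 1 := pow_lt_one₀ hc0 hq (Nat.succ_ne_zero i)
    linarith
  have hfac1 : ∀ i : ℕ, 1 - c ^ (i + 1) ≤ 1 := fun i => by
    have : 0 ≤ c ^ (i+1) := pow_nonneg hc0 _
    linarith
  -- choose N with tail sums ≤ 1/2
  obtain ⟨N, hN⟩ : ∃ N : ℕ, c ^ (N + 1) * (1 - c)⁻¹ ≤ 1 / 2 := by
    have h1 : Tendsto (fun N : ℕ => c ^ (N + 1) * (1 - c)⁻¹) atTop (𝓝 0) := by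
      have := tendsto_pow_atTop_nhds_zero_of_lt_one hc0 hq
      simpa using ((this.comp (tendsto_add_atTop_nat 1)).mul_const (1 - c)⁻¹)
    exact ((h1.eventually_lt_const (by norm_num : (0:ℝ) < 1/2)).mono fun n h => h.le).exists
  have htailsum : ∀ n, N ≤ n → ∑ i ∈ Ico N n, c ^ (i + 1) ≤ 1 / 2 := by
    intro n hn
    have hre : ∑ i ∈ Ico N n, c ^ (i + 1) = ∑ j ∈ range (n - N), c ^ (N + j + 1) := by
      rw [Finset.sum_Ico_eq_sum_range]
    rw [hre]
    have hterm : ∀ j, c ^ (N + j + 1) = c ^ (N + 1) * c ^ j := fun j => by ring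
    calc ∑ j ∈ range (n - N), c ^ (N + j + 1)
        = c ^ (N + 1) * ∑ j ∈ range (n - N), c ^ j := by
          rw [Finset.mul_sum]; exact Finset.sum_congr rfl fun j _ => hterm j
      _ ≤ c ^ (N + 1) * (1 - c)⁻¹ := by
          refine mul_le_mul_of_nonneg_left ?_ (pow_nonneg hc0 _)
          refine (Summable.sum_le_tsum (range (n - N)) (fun i _ => pow_nonneg hc0 _)
            (summable_geometric_of_lt_one hc0 hq)).trans ?_
          rw [tsum_geometric_of_lt_one hc0 hq]
      _ ≤ 1 / 2 := hN
  have hlow : ∀ n, (∏ i ∈ range n, (1 - c ^ (i + 1))) ≤ ‖qPochN q n‖ := by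
    intro n
    rw [qPochN, norm_prod]
    refine Finset.prod_le_prod (fun i _ => hfac0 i) fun i _ => ?_
    calc 1 - c ^ (i + 1) = ‖(1:ℂ)‖ - ‖q ^ (i+1)‖ := by
          rw [norm_one, norm_pow]
      _ ≤ ‖1 - q ^ (i + 1)‖ := norm_sub_norm_le _ _
  set P := ∏ i ∈ range N, (1 - c ^ (i + 1)) with hP
  have hPpos : 0 < P := Finset.prod_pos fun i _ => hfacpos i
  refine ⟨P * (1/2), by positivity, fun n => ?_⟩
  refine le_trans ?_ (hlow n)
  rcases le_or_gt N n with h | h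
  · rw [← Finset.prod_range_mul_prod_Ico _ h]
    refine mul_le_mul_of_nonneg_left ?_ hPpos.le
    calc (1:ℝ)/2 ≤ 1 - ∑ i ∈ Ico N n, c ^ (i+1) := by linarith [htailsum n h]
      _ ≤ ∏ i ∈ Ico N n, (1 - c ^ (i+1)) :=
          weier _ _ (fun i => pow_nonneg hc0 _) (fun i => pow_le_one₀ hc0 hq.le)
  · have : P ≤ ∏ i ∈ range n, (1 - c ^ (i + 1)) := by
      rw [hP, ← Finset.prod_range_mul_prod_Ico _ h.le]
      have h1 : ∏ i ∈ Ico n N, (1 - c ^ (i+1)) ≤ 1 :=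
        Finset.prod_le_one (fun i _ => hfac0 i) (fun i _ => hfac1 i)
      have h2 : 0 ≤ ∏ i ∈ range n, (1 - c ^ (i+1)) :=
        Finset.prod_nonneg fun i _ => hfac0 i
      nlinarith
    nlinarith [hPpos]

lemma poch_norm_le (a : ℂ) (hq : ‖q‖ < 1) (n : ℕ) :
    ‖poch a q n‖ ≤ Real.exp (‖a‖ * (1 - ‖q‖)⁻¹) := by
  rw [poch, norm_prod]
  have h1 : ∀ i ∈ range n, ‖1 - a * q ^ i‖ ≤ Real.exp (‖a‖ * ‖q‖ ^ i) := by
    intro i _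
    calc ‖1 - a * q ^ i‖ ≤ ‖(1:ℂ)‖ + ‖a * q ^ i‖ := norm_sub_le _ _
      _ = 1 + ‖a‖ * ‖q‖ ^ i := by rw [norm_one, norm_mul, norm_pow]
      _ ≤ Real.exp (‖a‖ * ‖q‖ ^ i) := by
          linarith [Real.add_one_le_exp (‖a‖ * ‖q‖ ^ i)]
  calc ∏ i ∈ range n, ‖1 - a * q ^ i‖ ≤ ∏ i ∈ range n, Real.exp (‖a‖ * ‖q‖ ^ i) :=
        Finset.prod_le_prod (fun i _ => norm_nonneg _) h1
    _ = Real.exp (∑ i ∈ range n, ‖a‖ * ‖q‖ ^ i) := (Real.exp_sum _ _).symm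
    _ ≤ Real.exp (‖a‖ * (1 - ‖q‖)⁻¹) := by
        refine Real.exp_le_exp.2 ?_
        rw [← Finset.mul_sum]
        refine mul_le_mul_of_nonneg_left ?_ (norm_nonneg a)
        refine (Summable.sum_le_tsum (range n) (fun i _ => pow_nonneg (norm_nonneg q) _)
          (summable_geometric_of_lt_one (norm_nonneg q) hq)).trans ?_
        rw [tsum_geometric_of_lt_one (norm_nonneg q) hq]

lemma summable_bdd_mul_pow {c : ℕ → ℂ} {C : ℝ} (hC : ∀ n, ‖c n‖ ≤ C) {x : ℂ} (hx : ‖x‖ < 1) :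
    Summable fun n => c n * x ^ n := by
  refine Summable.of_norm_bounded
    ((summable_geometric_of_lt_one (norm_nonneg x) hx).mul_left C) fun n => ?_
  rw [norm_mul, norm_pow]
  exact mul_le_mul_of_nonneg_right (hC n) (pow_nonneg (norm_nonneg x) _)

lemma qPochN_ne_zero (hq : ‖q‖ < 1) (n : ℕ) : qPochN q n ≠ 0 := by
  refine Finset.prod_ne_zero_iff.2 fun i _ => ?_
  intro h
  have h1 : q ^ (i+1) = 1 := by linear_combination -h
  have := norm_pow q (i+1)
  rw [h1] at this
  simp only [norm_one] at this
  have : ‖q‖ ^ (i + 1) < 1 := pow_lt_one₀ (norm_nonneg q) hq (Nat.succ_ne_zero i)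
  linarith


noncomputable def Sq (q a x : ℂ) : ℂ := ∑' n : ℕ, poch a q n / qPochN q n * x ^ n

variable {q : ℂ}

lemma one_sub_q_pow_succ_ne_zero (hq : ‖q‖ < 1) (n : ℕ) : (1 : ℂ) - q ^ (n + 1) ≠ 0 := by
  intro h
  have h1 : q ^ (n+1) = 1 := by linear_combination -h
  have h2 := norm_pow q (n+1)
  rw [h1] at h2
  simp only [norm_one] at h2
  have : ‖q‖ ^ (n + 1) < 1 := pow_lt_one₀ (norm_nonneg q) hq (Nat.succ_ne_zero n)
  linarith

lemma coeff_bound (hq : ‖q‖ < 1) (a : ℂ) :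
    ∃ C : ℝ, 0 ≤ C ∧ ∀ n, ‖poch a q n / qPochN q n‖ ≤ C := by
  obtain ⟨δ, hδ, hδ'⟩ := exists_qPochN_lower hq
  refine ⟨Real.exp (‖a‖ * (1 - ‖q‖)⁻¹) / δ, by positivity, fun n => ?_⟩
  rw [norm_div]
  exact div_le_div₀ (Real.exp_pos _).le (poch_norm_le a hq n) hδ (hδ' n)

lemma coeff_rec (hq : ‖q‖ < 1) (a : ℂ) (n : ℕ) :
    poch a q (n+1) / qPochN q (n+1) * (1 - q ^ (n+1))
      = poch a q n / qPochN q n * (1 - a * q ^ n) := by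
  have h1 : qPochN q (n+1) = qPochN q n * (1 - q ^ (n+1)) := Finset.prod_range_succ _ n
  have h2 : poch a q (n+1) = poch a q n * (1 - a * q ^ n) := Finset.prod_range_succ _ n
  have hQ : qPochN q n ≠ 0 := qPochN_ne_zero hq n
  have hf : (1:ℂ) - q ^ (n+1) ≠ 0 := one_sub_q_pow_succ_ne_zero hq n
  rw [h1, h2]
  field_simp

lemma coeff_zero (q a : ℂ) : poch a q 0 / qPochN q 0 = 1 := by
  simp [poch, qPochN]

lemma funEq (hq : ‖q‖ < 1) (a x : ℂ) (hx : ‖x‖ < 1) :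
    Sq q a x * (1 - x) = Sq q a (q * x) * (1 - a * x) := by
  set c : ℕ → ℂ := fun n => poch a q n / qPochN q n with hc
  obtain ⟨C, hC0, hC⟩ := coeff_bound hq a
  have hcq : ∀ n, ‖c n * q ^ n‖ ≤ C := fun n => by
    rw [norm_mul, norm_pow]
    have h1 : ‖q‖ ^ n ≤ 1 := pow_le_one₀ (norm_nonneg q) hq.le
    nlinarith [hC n, norm_nonneg (c n), pow_nonneg (norm_nonneg q) n]
  have hA : Summable fun n => c n * x ^ n := summable_bdd_mul_pow hC hx
  have hB : Summable fun n => c n * x ^ (n+1) :=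
    (hA.mul_right x).congr fun n => by ring
  have hD : Summable fun n => c n * q ^ n * x ^ n := summable_bdd_mul_pow hcq hx
  have hE : Summable fun n => a * (c n * q ^ n) * x ^ (n+1) :=
    ((hD.mul_right x).mul_left a).congr fun n => by ring
  have hSx : Sq q a x = ∑' n, c n * x ^ n := rfl
  have hS2 : Sq q a (q * x) = ∑' n, c n * q ^ n * x ^ n :=
    tsum_congr fun n => by rw [hc]; rw [mul_pow]; ring
  have hAx : (∑' n, c n * x ^ n) * x = ∑' n, c n * x ^ (n+1) := by
    rw [← tsum_mul_right]
    exact tsum_congr fun n => by ring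
  have hDx : (∑' n, c n * q ^ n * x ^ n) * (a * x) = ∑' n, a * (c n * q ^ n) * x ^ (n+1) := by
    rw [← tsum_mul_right]
    exact tsum_congr fun n => by ring
  have key : ∑' n, (c n - c n * q ^ n) * x ^ n
      = ∑' n, (c n - a * (c n * q ^ n)) * x ^ (n+1) := by
    have hsum : Summable fun n => (c n - c n * q ^ n) * x ^ n :=
      (hA.sub hD).congr fun n => by ring
    rw [Summable.tsum_eq_zero_add hsum]
    rw [show (c 0 - c 0 * q ^ 0) * x ^ 0 = 0 by simp, zero_add]
    exact tsum_congr fun n => by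
      have hrec := coeff_rec hq a n
      rw [hc]
      linear_combination x ^ (n+1) * hrec
  have hsub1 : ∑' n, (c n - c n * q ^ n) * x ^ n
      = (∑' n, c n * x ^ n) - ∑' n, c n * q ^ n * x ^ n := by
    rw [← Summable.tsum_sub hA hD]
    exact tsum_congr fun n => by ring
  have hsub2 : ∑' n, (c n - a * (c n * q ^ n)) * x ^ (n+1)
      = (∑' n, c n * x ^ (n+1)) - ∑' n, a * (c n * q ^ n) * x ^ (n+1) := by
    rw [← Summable.tsum_sub hB hE]
    exact tsum_congr fun n => by ring
  rw [hSx, hS2, mul_one_sub, mul_one_sub, hAx, hDx]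
  rw [hsub1, hsub2] at key
  linear_combination key

lemma norm_pow_mul_lt (hq : ‖q‖ < 1) {x : ℂ} (hx : ‖x‖ < 1) (N : ℕ) : ‖q ^ N * x‖ < 1 := by
  rw [norm_mul, norm_pow]
  have h1 : ‖q‖ ^ N ≤ 1 := pow_le_one₀ (norm_nonneg q) hq.le
  nlinarith [norm_nonneg x, pow_nonneg (norm_nonneg q) N]

lemma iterEq (hq : ‖q‖ < 1) (a x : ℂ) (hx : ‖x‖ < 1) (N : ℕ) :
    Sq q a x * ∏ i ∈ range N, (1 - x * q ^ i)
      = Sq q a (q ^ N * x) * ∏ i ∈ range N, (1 - a * x * q ^ i) := by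
  induction N with
  | zero => simp
  | succ N ih =>
    rw [prod_range_succ, prod_range_succ, ← mul_assoc, ih]
    have hx' : ‖q ^ N * x‖ < 1 := norm_pow_mul_lt hq hx N
    have hfe := funEq hq a (q ^ N * x) hx'
    have e1 : q * (q ^ N * x) = q ^ (N+1) * x := by ring
    rw [e1] at hfe
    linear_combination (∏ i ∈ range N, (1 - a * x * q ^ i)) * hfe

lemma Sq_tendsto_one (hq : ‖q‖ < 1) (a x : ℂ) (hx : ‖x‖ < 1) :
    Tendsto (fun N => Sq q a (q ^ N * x)) atTop (𝓝 1) := by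
  set c : ℕ → ℂ := fun n => poch a q n / qPochN q n with hc
  obtain ⟨C, hC0, hC⟩ := coeff_bound hq a
  have hxn : (0:ℝ) ≤ ‖x‖ := norm_nonneg x
  have hbound : ∀ N, ‖Sq q a (q ^ N * x) - 1‖ ≤ C * ‖x‖ * (1 - ‖x‖)⁻¹ * ‖q‖ ^ N := by
    intro N
    set z := q ^ N * x with hz
    have hzx : ‖z‖ = ‖q‖ ^ N * ‖x‖ := by rw [hz, norm_mul, norm_pow]
    have hzle : ‖z‖ ≤ ‖x‖ := by
      rw [hzx]
      nlinarith [pow_le_one₀ (norm_nonneg q) hq.le (n := N), pow_nonneg (norm_nonneg q) N]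
    have hz1 : ‖z‖ < 1 := lt_of_le_of_lt hzle hx
    have hS : Summable fun n => c n * z ^ n := summable_bdd_mul_pow hC hz1
    have hSz : Sq q a z = ∑' n, c n * z ^ n := rfl
    have hsplit : Sq q a z = c 0 * z ^ 0 + ∑' n, c (n+1) * z ^ (n+1) := by
      rw [hSz, Summable.tsum_eq_zero_add hS]
    have hc0 : c 0 * z ^ 0 = 1 := by rw [hc]; simp [coeff_zero]
    have hsub : Sq q a z - 1 = ∑' n, c (n+1) * z ^ (n+1) := by
      rw [hsplit, hc0]; ring
    rw [hsub]
    have hterm : ∀ n, ‖c (n+1) * z ^ (n+1)‖ ≤ (C * ‖x‖ * ‖q‖ ^ N) * ‖x‖ ^ n := by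
      intro n
      rw [norm_mul, norm_pow]
      have h1 : ‖z‖ ^ (n+1) ≤ (‖q‖ ^ N * ‖x‖) * ‖x‖ ^ n := by
        rw [pow_succ', ← hzx]
        have h2 : ‖z‖ ^ n ≤ ‖x‖ ^ n := pow_le_pow_left₀ (norm_nonneg z) hzle n
        exact mul_le_mul_of_nonneg_left h2 (norm_nonneg z)
      nlinarith [hC (n+1), norm_nonneg (c (n+1)), pow_nonneg (norm_nonneg z) (n+1),
        pow_nonneg hxn n, pow_nonneg (norm_nonneg q) N]
    have hgeo : Summable fun n : ℕ => (C * ‖x‖ * ‖q‖ ^ N) * ‖x‖ ^ n :=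
      (summable_geometric_of_lt_one hxn hx).mul_left _
    have hnorm : Summable fun n => ‖c (n+1) * z ^ (n+1)‖ :=
      Summable.of_nonneg_of_le (fun n => norm_nonneg _) hterm hgeo
    calc ‖∑' n, c (n+1) * z ^ (n+1)‖ ≤ ∑' n, ‖c (n+1) * z ^ (n+1)‖ :=
          norm_tsum_le_tsum_norm hnorm
      _ ≤ ∑' n : ℕ, (C * ‖x‖ * ‖q‖ ^ N) * ‖x‖ ^ n := Summable.tsum_le_tsum hterm hnorm hgeo
      _ = (C * ‖x‖ * ‖q‖ ^ N) * (1 - ‖x‖)⁻¹ := by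
          rw [tsum_mul_left, tsum_geometric_of_lt_one hxn hx]
      _ = C * ‖x‖ * (1 - ‖x‖)⁻¹ * ‖q‖ ^ N := by ring
  have hlim : Tendsto (fun N : ℕ => C * ‖x‖ * (1 - ‖x‖)⁻¹ * ‖q‖ ^ N) atTop (𝓝 0) := by
    simpa using (tendsto_pow_atTop_nhds_zero_of_lt_one (norm_nonneg q) hq).const_mul
      (C * ‖x‖ * (1 - ‖x‖)⁻¹)
  rw [tendsto_iff_norm_sub_tendsto_zero]
  exact squeeze_zero (fun N => norm_nonneg _) hbound hlim

lemma Sq_eq (hq : ‖q‖ < 1) (a x : ℂ) (hx : ‖x‖ < 1) :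
    Sq q a x * (∏' i : ℕ, (1 - x * q ^ i)) = ∏' i : ℕ, (1 - a * x * q ^ i) := by
  have h1 : Tendsto (fun N => Sq q a x * ∏ i ∈ range N, (1 - x * q ^ i)) atTop
      (𝓝 (Sq q a x * ∏' i : ℕ, (1 - x * q ^ i))) :=
    (tendsto_partial_prod x hq).const_mul _
  have h2 : Tendsto (fun N => Sq q a (q ^ N * x) * ∏ i ∈ range N, (1 - a * x * q ^ i)) atTop
      (𝓝 (1 * ∏' i : ℕ, (1 - a * x * q ^ i))) :=
    (Sq_tendsto_one hq a x hx).mul (tendsto_partial_prod (a * x) hq)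
  have := tendsto_nhds_unique (h1.congr fun N => iterEq hq a x hx N) h2
  rw [this, one_mul]

end QAux

open QAux in
set_option maxHeartbeats 2000000 in
/-- For `|q| < 1`, `|x| < 1`, `|y| < 1`:
`(xy;q)_∞ / ((x;q)_∞ (y;q)_∞) = ∑_{r,s ≥ 0} q^{rs} x^r y^s / ((q;q)_r (q;q)_s)`. -/
theorem qpoch_double_sum (q x y : ℂ) (hq : ‖q‖ < 1) (hx : ‖x‖ < 1) (hy : ‖y‖ < 1) :
    (∏' i : ℕ, (1 - x * y * q ^ i)) /
        ((∏' i : ℕ, (1 - x * q ^ i)) * (∏' i : ℕ, (1 - y * q ^ i))) =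
      ∑' rs : ℕ × ℕ,
        q ^ (rs.1 * rs.2) * x ^ rs.1 * y ^ rs.2 / (qPochN q rs.1 * qPochN q rs.2) := by
  obtain ⟨δ, hδ, hδ'⟩ := exists_qPochN_lower hq
  have hPx : (∏' i : ℕ, (1 - x * q ^ i)) ≠ 0 := tprod_ne_zero hx hq
  have hPy : (∏' i : ℕ, (1 - y * q ^ i)) ≠ 0 := tprod_ne_zero hy hq
  -- summability of the double series
  have hgx : Summable fun r : ℕ => δ⁻¹ * ‖x‖ ^ r :=
    (summable_geometric_of_lt_one (norm_nonneg x) hx).mul_left _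
  have hgy : Summable fun s : ℕ => δ⁻¹ * ‖y‖ ^ s :=
    (summable_geometric_of_lt_one (norm_nonneg y) hy).mul_left _
  have hgg : Summable fun rs : ℕ × ℕ => (δ⁻¹ * ‖x‖ ^ rs.1) * (δ⁻¹ * ‖y‖ ^ rs.2) :=
    hgx.mul_of_nonneg hgy (fun r => by positivity) (fun s => by positivity)
  have hF : Summable fun rs : ℕ × ℕ =>
      q ^ (rs.1 * rs.2) * x ^ rs.1 * y ^ rs.2 / (qPochN q rs.1 * qPochN q rs.2) := by
    refine Summable.of_norm_bounded hgg fun rs => ?_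
    obtain ⟨r, s⟩ := rs
    rw [norm_div, norm_mul, norm_mul, norm_mul, norm_pow, norm_pow, norm_pow]
    have h1 : ‖q‖ ^ (r * s) ≤ 1 := pow_le_one₀ (norm_nonneg q) hq.le
    have h2 : ‖q‖ ^ (r*s) * ‖x‖ ^ r * ‖y‖ ^ s ≤ ‖x‖ ^ r * ‖y‖ ^ s := by
      calc ‖q‖ ^ (r*s) * ‖x‖ ^ r * ‖y‖ ^ s = ‖q‖ ^ (r*s) * (‖x‖ ^ r * ‖y‖ ^ s) := by ring
        _ ≤ 1 * (‖x‖ ^ r * ‖y‖ ^ s) := by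
            refine mul_le_mul_of_nonneg_right h1 (by positivity)
        _ = ‖x‖ ^ r * ‖y‖ ^ s := one_mul _
    have h3 : δ * δ ≤ ‖qPochN q r‖ * ‖qPochN q s‖ :=
      mul_le_mul (hδ' r) (hδ' s) hδ.le (le_trans hδ.le (hδ' r))
    calc ‖q‖ ^ (r*s) * ‖x‖ ^ r * ‖y‖ ^ s / (‖qPochN q r‖ * ‖qPochN q s‖)
        ≤ (‖x‖ ^ r * ‖y‖ ^ s) / (δ * δ) := by
          refine div_le_div₀ (by positivity) h2 (by positivity) h3
      _ = (δ⁻¹ * ‖x‖ ^ r) * (δ⁻¹ * ‖y‖ ^ s) := by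
          field_simp
  -- inner sums
  have hinner : ∀ r : ℕ, (∑' s : ℕ,
      q ^ (r * s) * x ^ r * y ^ s / (qPochN q r * qPochN q s))
        = x ^ r / qPochN q r * Sq q 0 (q ^ r * y) := by
    intro r
    rw [Sq, ← tsum_mul_left]
    refine tsum_congr fun s => ?_
    have hp0 : poch 0 q s = 1 := by simp [poch]
    rw [hp0, mul_pow, ← pow_mul]
    have hQr := qPochN_ne_zero hq r
    have hQs := qPochN_ne_zero hq s
    field_simp
  have hSq0 : ∀ r : ℕ, Sq q 0 (q ^ r * y) * (∏' i : ℕ, (1 - q ^ r * y * q ^ i)) = 1 := by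
    intro r
    have h := Sq_eq hq 0 (q ^ r * y) (norm_pow_mul_lt hq hy r)
    have h2 : (∏' i : ℕ, (1 - 0 * (q ^ r * y) * q ^ i)) = 1 := by
      calc (∏' i : ℕ, (1 - 0 * (q ^ r * y) * q ^ i)) = ∏' _i : ℕ, (1 : ℂ) :=
            tprod_congr fun i => by ring
        _ = 1 := tprod_one
    rw [h2] at h
    exact h
  have hTne : ∀ r : ℕ, (∏' i : ℕ, (1 - q ^ r * y * q ^ i)) ≠ 0 := by
    intro r
    exact tprod_ne_zero (norm_pow_mul_lt hq hy r) hq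
  have hfact : ∀ r : ℕ, poch y q r * (∏' i : ℕ, (1 - q ^ r * y * q ^ i))
      = ∏' i : ℕ, (1 - y * q ^ i) := by
    intro r
    rw [← tprod_factorization y hq r]
    congr 1
    exact tprod_congr fun i => by ring
  have hSval : ∀ r : ℕ, Sq q 0 (q ^ r * y)
      = poch y q r / (∏' i : ℕ, (1 - y * q ^ i)) := by
    intro r
    rw [eq_div_iff hPy, ← hfact r]
    calc Sq q 0 (q ^ r * y) * (poch y q r * ∏' i : ℕ, (1 - q ^ r * y * q ^ i))
        = poch y q r * (Sq q 0 (q ^ r * y) * ∏' i : ℕ, (1 - q ^ r * y * q ^ i)) := by ring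
      _ = poch y q r := by rw [hSq0 r, mul_one]
  have hSqyx : Sq q y x = (∏' i : ℕ, (1 - x * y * q ^ i)) / (∏' i : ℕ, (1 - x * q ^ i)) := by
    rw [eq_div_iff hPx]
    rw [Sq_eq hq y x hx]
    exact tprod_congr fun i => by ring
  have hR : (∑' rs : ℕ × ℕ,
      q ^ (rs.1 * rs.2) * x ^ rs.1 * y ^ rs.2 / (qPochN q rs.1 * qPochN q rs.2))
      = (∏' i : ℕ, (1 - x * y * q ^ i)) /
        ((∏' i : ℕ, (1 - x * q ^ i)) * (∏' i : ℕ, (1 - y * q ^ i))) := by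
    calc (∑' rs : ℕ × ℕ,
        q ^ (rs.1 * rs.2) * x ^ rs.1 * y ^ rs.2 / (qPochN q rs.1 * qPochN q rs.2))
        = ∑' r : ℕ, ∑' s : ℕ,
            q ^ (r * s) * x ^ r * y ^ s / (qPochN q r * qPochN q s) := Summable.tsum_prod hF
      _ = ∑' r : ℕ, x ^ r / qPochN q r * Sq q 0 (q ^ r * y) := tsum_congr hinner
      _ = ∑' r : ℕ, (poch y q r / qPochN q r * x ^ r) / (∏' i : ℕ, (1 - y * q ^ i)) := by
          refine tsum_congr fun r => ?_
          rw [hSval r]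
          ring
      _ = (∑' r : ℕ, poch y q r / qPochN q r * x ^ r) / (∏' i : ℕ, (1 - y * q ^ i)) :=
          tsum_div_const
      _ = Sq q y x / (∏' i : ℕ, (1 - y * q ^ i)) := by rw [Sq]
      _ = ((∏' i : ℕ, (1 - x * y * q ^ i)) / (∏' i : ℕ, (1 - x * q ^ i)))
            / (∏' i : ℕ, (1 - y * q ^ i)) := by rw [hSqyx]
      _ = (∏' i : ℕ, (1 - x * y * q ^ i)) /
            ((∏' i : ℕ, (1 - x * q ^ i)) * (∏' i : ℕ, (1 - y * q ^ i))) := by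
          rw [div_div]
  rw [hR]
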